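/- Let A = k⟨x₁, x₂, x₃⟩ be the DG algebra with |x₁| = |x₂| = 0, |x₃| = −1, dx₁ = dx₂ = 0, dx₃ = x₁x₂ − x₂x₁ − 1. Then the quotient map A → A/(x₃, δ) ≅ A₁ (the first Weyl algebra concentrated in degree 0 with zero differential) is a quasi-isomorphism of DG algebras. In particular, H⁰(A) ≅ A₁ and Hⁿ(A) = 0 for n ≠ 0. -/

import Mathlib

noncomputable section

/-- The underlying graded algebra: the free algebra `A = k⟨x₁, x₂, x₃⟩`. -/
abbrev FA3 (k : Type) [Field k] := MonoidAlgebra k (FreeMonoid (Fin 3))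

/-- The free algebra `k⟨x₁, x₂⟩`. -/
abbrev FA2 (k : Type) [Field k] := MonoidAlgebra k (FreeMonoid (Fin 2))

/-- The generators of `A`: `X 0 = x₁`, `X 1 = x₂`, `X 2 = x₃`. -/
def X {k : Type} [Field k] (i : Fin 3) : FA3 k :=
  MonoidAlgebra.single (FreeMonoid.of i) 1

/-- The generators of `k⟨x₁, x₂⟩`. -/
def Y {k : Type} [Field k] (i : Fin 2) : FA2 k :=
  MonoidAlgebra.single (FreeMonoid.of i) 1

/-- Cohomological degree of a word for generator degrees `degs`. -/
def wdeg (degs : Fin 3 → ℤ) (w : FreeMonoid (Fin 3)) : ℤ :=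
  ((FreeMonoid.toList w).map degs).sum

/-- The sign operator used in the graded Leibniz rule. -/
def sgn {k : Type} [Field k] (degs : Fin 3 → ℤ) (f : FA3 k) : FA3 k :=
  f.coeff.sum fun w c => ((Int.negOnePow (wdeg degs w) : ℤˣ) : ℤ) • MonoidAlgebra.single w c

/-- The defining relation of the first Weyl algebra: `x₁ * x₂ = x₂ * x₁ + 1`. -/
def weylRel (k : Type) [Field k] : FA2 k → FA2 k → Prop :=
  fun a b => a = Y 0 * Y 1 ∧ b = Y 1 * Y 0 + 1

/-- The first Weyl algebra `A₁ = k⟨x₁, x₂⟩/(x₁x₂ − x₂x₁ − 1)`, viewed as a DG algebra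
concentrated in degree 0 with zero differential. -/
abbrev Weyl (k : Type) [Field k] := RingQuot (weylRel k)

/-- The quotient map `A → A/(x₃, δ) ≅ A₁`, sending `x₁ ↦ x₁`, `x₂ ↦ x₂`, `x₃ ↦ 0`. -/
def π (k : Type) [Field k] : FA3 k →ₐ[k] Weyl k :=
  (RingQuot.mkAlgHom k (weylRel k)).comp
    ((MonoidAlgebra.lift k (FA2 k) (FreeMonoid (Fin 3)))
      (FreeMonoid.lift ![Y 0, Y 1, 0]))

section
variable (k : Type) [Field k]

def s (l : List (Fin 3)) : FA3 k := MonoidAlgebra.single (FreeMonoid.ofList l) 1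

lemma s_nil : s k [] = 1 := by
  rw [MonoidAlgebra.one_def]; rfl

lemma s_cons (i : Fin 3) (l : List (Fin 3)) : s k (i :: l) = X i * s k l := by
  rw [X, s, s, MonoidAlgebra.single_mul_single, one_mul]; rfl

lemma s_append (l₁ l₂ : List (Fin 3)) : s k (l₁ ++ l₂) = s k l₁ * s k l₂ := by
  rw [s, s, s, MonoidAlgebra.single_mul_single, one_mul]; rfl

lemma sX (i : Fin 3) : X i = s k [i] := by
  rw [s_cons, s_nil, mul_one]

def scan : List (Fin 3) → Option (List (Fin 3) × List (Fin 3))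
  | [] => none
  | i :: u =>
    if i = 2 then none
    else if i = 0 ∧ u.head? = some 1 then some ([], u.tail)
    else (scan u).map fun pu => (i :: pu.1, pu.2)

def Good (p : List (Fin 3)) : Prop :=
  2 ∉ p ∧ (∀ v, scan (p ++ [0,1] ++ v) = some (p, v)) ∧ (∀ v, scan (p ++ [2] ++ v) = none)

lemma Good_nil : Good [] := by
  refine ⟨by simp, fun v => ?_, fun v => ?_⟩ <;> simp [scan]

lemma head?_app (p : List (Fin 3)) (x : Fin 3) (r r' : List (Fin 3)) :
    (p ++ x :: r).head? = (p ++ x :: r').head? := by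
  cases p <;> simp

lemma Good_cons {p : List (Fin 3)} {i : Fin 3} (hp : Good p) (h2 : i ≠ 2)
    (hno : ¬(i = 0 ∧ p.head? = some 1)) : Good (i :: p) := by
  obtain ⟨hmem, hab, ht⟩ := hp
  refine ⟨?_, fun v => ?_, fun v => ?_⟩
  · intro hm
    rcases List.mem_cons.mp hm with h | h
    · exact h2 h.symm
    · exact hmem h
  · show scan (i :: (p ++ [0,1] ++ v)) = _
    rw [scan]
    rw [if_neg h2, if_neg, hab v]
    · rfl
    · rintro ⟨rfl, hh⟩
      cases p with
      | nil => simp at hh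
      | cons x p' => simp at hh; exact hno ⟨rfl, by simp [hh]⟩
  · show scan (i :: (p ++ [2] ++ v)) = _
    rw [scan]
    rw [if_neg h2, if_neg, ht v]
    · rfl
    · rintro ⟨rfl, hh⟩
      cases p with
      | nil => simp at hh
      | cons x p' => simp at hh; exact hno ⟨rfl, by simp [hh]⟩

lemma scan_some : ∀ {w p u}, scan w = some (p, u) → w = p ++ [0,1] ++ u ∧ Good p := by
  intro w
  induction w with
  | nil => intro p u h; simp [scan] at h
  | cons i u ih =>
    intro p u' h
    rw [scan] at h
    split_ifs at h with h1 h2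
    · rcases h2 with ⟨rfl, hh⟩
      cases u with
      | nil => simp at hh
      | cons x v =>
        simp at hh
        subst hh
        simp at h
        obtain ⟨rfl, rfl⟩ := h
        exact ⟨rfl, Good_nil⟩
    · rw [Option.map_eq_some_iff] at h
      obtain ⟨⟨p₁, u₁⟩, hsc, heq⟩ := h
      obtain ⟨rfl, hg⟩ := ih hsc
      simp at heq
      obtain ⟨rfl, rfl⟩ := heq
      refine ⟨by simp, Good_cons hg h1 ?_⟩
      rintro ⟨rfl, hh⟩
      cases p₁ with
      | nil => simp at hh
      | cons x p' => simp at hh; exact h2 ⟨rfl, by simp [hh]⟩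

lemma scan_none_no2 : ∀ {w}, scan w = none → (2 : Fin 3) ∉ w →
    ∃ i j, w = List.replicate i 1 ++ List.replicate j 0 := by
  intro w
  induction w with
  | nil => exact fun _ _ => ⟨0, 0, rfl⟩
  | cons i u ih =>
    intro h hmem
    rw [scan] at h
    split_ifs at h with h1 h2
    · exact (hmem (by rw [h1]; exact List.mem_cons_self)).elim
    · rw [Option.map_eq_none_iff] at h
      obtain ⟨a, b, hab⟩ := ih h (fun hu => hmem (List.mem_cons_of_mem _ hu))
      subst hab
      have hi : i = 0 ∨ i = 1 := by
        fin_cases i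
        · exact Or.inl rfl
        · exact Or.inr rfl
        · exact absurd rfl h1
      rcases hi with rfl | rfl
      · have ha : a = 0 := by
          by_contra hne
          cases a with
          | zero => exact hne rfl
          | succ a' => exact h2 ⟨rfl, by simp [List.replicate_succ]⟩
        subst ha
        exact ⟨0, b + 1, by simp [List.replicate_succ]⟩
      · exact ⟨a + 1, b, by simp [List.replicate_succ]⟩

lemma scan_none_mem2 : ∀ {w}, scan w = none → (2 : Fin 3) ∈ w →
    ∃ p u, w = p ++ [2] ++ u ∧ Good p := by
  intro w
  induction w with
  | nil => simp
  | cons i u ih =>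
    intro h hmem
    rw [scan] at h
    split_ifs at h with h1 h2
    · subst h1; exact ⟨[], u, rfl, Good_nil⟩
    · rw [Option.map_eq_none_iff] at h
      have hmem' : (2 : Fin 3) ∈ u := by
        rcases List.mem_cons.mp hmem with h' | h'
        · exact absurd h'.symm h1
        · exact h'
      obtain ⟨p₁, u₁, hw, hg⟩ := ih h hmem'
      subst hw
      refine ⟨i :: p₁, u₁, by simp, Good_cons hg h1 ?_⟩
      rintro ⟨rfl, hh⟩
      cases p₁ with
      | nil => simp at hh
      | cons x p' => simp at hh; exact h2 ⟨rfl, by simp [hh]⟩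


def inv01 : List (Fin 3) → ℕ
  | [] => 0
  | i :: u => (if i = 0 then u.count 1 else 0) + inv01 u

lemma inv01_append (x y : List (Fin 3)) :
    inv01 (x ++ y) = inv01 x + x.count 0 * y.count 1 + inv01 y := by
  induction x with
  | nil => simp [inv01]
  | cons i x ih =>
    simp only [List.cons_append, inv01, ih, List.count_cons, List.count_append]
    rcases eq_or_ne i 0 with h | h <;> simp [h, ih] <;> ring

lemma inv01_swap (p u : List (Fin 3)) :
    inv01 (p ++ [1,0] ++ u) < inv01 (p ++ [0,1] ++ u) := by
  simp only [List.append_assoc, List.cons_append, List.nil_append, inv01_append]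
  simp [inv01, List.count_cons]
  

lemma inv01_drop (p u : List (Fin 3)) :
    inv01 (p ++ u) < inv01 (p ++ [0,1] ++ u) := by
  simp only [List.append_assoc, List.cons_append, List.nil_append, inv01_append]
  simp [inv01, List.count_cons]
  nlinarith [Nat.zero_le (List.count 0 p)]

lemma scan_eq_some {w p u} (h : scan w = some (p, u)) : w = p ++ [0,1] ++ u :=
  (scan_some h).1

def hW : List (Fin 3) → FA3 k
  | w =>
    match h : scan w with
    | none => 0
    | some (p, u) => s k (p ++ [2] ++ u) + hW (p ++ [1,0] ++ u) + hW (p ++ u)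
  termination_by w => inv01 w
  decreasing_by
  · have := scan_eq_some h; subst this; exact inv01_swap p u
  · have := scan_eq_some h; subst this; exact inv01_drop p u

lemma hW_none {w} (h : scan w = none) : hW k w = 0 := by
  rw [hW, h]

lemma hW_some {w p u} (h : scan w = some (p, u)) :
    hW k w = s k (p ++ [2] ++ u) + hW k (p ++ [1,0] ++ u) + hW k (p ++ u) := by
  rw [hW, h]



def dL : List (Fin 3) → FA3 k
  | [] => 0
  | i :: u => if i = 2 then (X 0 * X 1 - X 1 * X 0 - 1) * s k u - X 2 * dL u
              else X i * dL u

lemma dL_no2 : ∀ {l}, (2 : Fin 3) ∉ l → dL k l = 0 := by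
  intro l
  induction l with
  | nil => intro _; rfl
  | cons i u ih =>
    intro h
    rw [dL, if_neg (by simp at h; tauto), ih (by simp at h; tauto), mul_zero]

lemma dL_append : ∀ {p} (u), (2 : Fin 3) ∉ p → dL k (p ++ u) = s k p * dL k u := by
  intro p
  induction p with
  | nil => intro u _; rw [s_nil, one_mul]; rfl
  | cons i q ih =>
    intro u h
    have h2 : i ≠ 2 := by simp at h; tauto
    rw [List.cons_append, dL, if_neg h2, ih u (by simp at h; tauto), s_cons, mul_assoc]

def H : FA3 k →ₗ[k] FA3 k :=
  Finsupp.linearCombination k (fun w : FreeMonoid (Fin 3) => hW k (FreeMonoid.toList w))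
    ∘ₗ (MonoidAlgebra.coeffLinearEquiv k : FA3 k ≃ₗ[k] _).toLinearMap

lemma H_single (w : FreeMonoid (Fin 3)) (c : k) :
    H k (MonoidAlgebra.single w c) = c • hW k (FreeMonoid.toList w) := by
  rw [H, LinearMap.comp_apply]; exact Finsupp.linearCombination_single k _ _

lemma H_s (l : List (Fin 3)) : H k (s k l) = hW k l := by
  rw [s, H_single, FreeMonoid.toList_ofList, one_smul]

def nw (i j : ℕ) : List (Fin 3) := List.replicate i 1 ++ List.replicate j 0

def NS : Submodule k (FA3 k) :=
  Submodule.span k (Set.range fun ij : ℕ × ℕ => s k (nw ij.1 ij.2))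


lemma s_mul_single (l : List (Fin 3)) (x : FreeMonoid (Fin 3)) (c : k) :
    s k l * MonoidAlgebra.single x c = c • s k (l ++ FreeMonoid.toList x) := by
  rw [s, s, MonoidAlgebra.single_mul_single, one_mul, MonoidAlgebra.smul_single', mul_one,
    FreeMonoid.ofList_append, FreeMonoid.ofList_toList]

lemma H_s_mul_single (l : List (Fin 3)) (x : FreeMonoid (Fin 3)) (c : k) :
    H k (s k l * MonoidAlgebra.single x c) = c • hW k (l ++ FreeMonoid.toList x) := by
  rw [s_mul_single, map_smul, H_s]

lemma L5 {p : List (Fin 3)} (hp : Good p) (f : FA3 k) :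
    H k (s k (p ++ [2]) * f) = 0 := by
  induction f using MonoidAlgebra.induction_linear with
  | zero => rw [mul_zero, map_zero]
  | add f g hf hg => rw [mul_add, map_add, hf, hg, add_zero]
  | single x c =>
    rw [H_s_mul_single, hW_none k (hp.2.2 _), smul_zero]

lemma L4 {p : List (Fin 3)} (hp : Good p) (f : FA3 k) :
    H k (s k (p ++ [0,1]) * f) =
      s k (p ++ [2]) * f + H k (s k (p ++ [1,0]) * f) + H k (s k p * f) := by
  induction f using MonoidAlgebra.induction_linear with
  | zero => simp
  | add f g hf hg =>
    rw [mul_add, map_add, hf, hg, mul_add, mul_add, mul_add, map_add, map_add]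
    abel
  | single x c =>
    rw [H_s_mul_single, H_s_mul_single, H_s_mul_single, s_mul_single,
      hW_some k (hp.2.1 _), smul_add, smul_add]


lemma sgn_single (degs : Fin 3 → ℤ) (w : FreeMonoid (Fin 3)) (c : k) :
    sgn degs (MonoidAlgebra.single w c)
      = ((Int.negOnePow (wdeg degs w) : ℤˣ) : ℤ) • MonoidAlgebra.single w c := by
  rw [sgn]
  exact MonoidAlgebra.sum_single_index (by simp)

lemma sgn_one (degs : Fin 3 → ℤ) : sgn degs (1 : FA3 k) = 1 := by
  rw [MonoidAlgebra.one_def, sgn_single]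
  have : wdeg degs 1 = 0 := by simp [wdeg]
  rw [this]
  simp

lemma fin3_cases (i : Fin 3) : i = 0 ∨ i = 1 ∨ i = 2 := by
  fin_cases i
  exacts [Or.inl rfl, Or.inr (Or.inl rfl), Or.inr (Or.inr rfl)]

lemma sgn_X (degs : Fin 3 → ℤ) (i : Fin 3) :
    sgn degs (X i : FA3 k) = ((Int.negOnePow (degs i) : ℤˣ) : ℤ) • (X i : FA3 k) := by
  rw [X, sgn_single]
  congr 1
  simp [wdeg]

lemma sgn_X0 : sgn ![0,0,-1] (X 0 : FA3 k) = X 0 := by rw [sgn_X]; simp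
lemma sgn_X1 : sgn ![0,0,-1] (X 1 : FA3 k) = X 1 := by rw [sgn_X]; simp
lemma sgn_X2 : sgn ![0,0,-1] (X 2 : FA3 k) = -X 2 := by
  rw [sgn_X]
  have : (![0,0,-1] : Fin 3 → ℤ) 2 = -1 := rfl
  rw [this]
  simp

variable {d : FA3 k →ₗ[k] FA3 k}

lemma d_one (hLeib : ∀ f g : FA3 k, d (f * g) = d f * g + sgn ![0,0,-1] f * d g) :
    d (1 : FA3 k) = 0 := by
  have h := hLeib 1 1
  rw [mul_one, mul_one, sgn_one, one_mul] at h
  exact left_eq_add.mp h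

lemma d_s (hLeib : ∀ f g : FA3 k, d (f * g) = d f * g + sgn ![0,0,-1] f * d g)
    (hd0 : d (X 0) = 0) (hd1 : d (X 1) = 0)
    (hd3 : d (X 2) = X 0 * X 1 - X 1 * X 0 - 1) :
    ∀ l, d (s k l) = dL k l := by
  intro l
  induction l with
  | nil => rw [s_nil, d_one k hLeib]; rfl
  | cons i u ih =>
    rw [s_cons, hLeib, ih]
    rcases fin3_cases i with rfl | rfl | rfl
    · rw [hd0, sgn_X0, zero_mul, zero_add, dL, if_neg (by decide)]
    · rw [hd1, sgn_X1, zero_mul, zero_add, dL, if_neg (by decide)]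
    · rw [hd3, sgn_X2, neg_mul, dL, if_pos rfl]; abel


lemma s_pair0 : s k [0,1] = X 0 * X 1 := by rw [s_cons, s_cons, s_nil, mul_one]
lemma s_pair1 : s k [1,0] = X 1 * X 0 := by rw [s_cons, s_cons, s_nil, mul_one]
lemma s_t : s k [2] = X 2 := (sX k 2).symm

lemma no2_app {p q : List (Fin 3)} (hp : (2:Fin 3) ∉ p) (hq : (2:Fin 3) ∉ q) :
    (2:Fin 3) ∉ p ++ q := by
  simp only [List.mem_append]
  tauto

lemma dL_t (p u : List (Fin 3)) (hp : (2:Fin 3) ∉ p) :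
    dL k (p ++ [2] ++ u) = s k (p ++ [0,1] ++ u) - s k (p ++ [1,0] ++ u) - s k (p ++ u)
      - s k (p ++ [2]) * dL k u := by
  rw [List.append_assoc, dL_append k _ hp]
  rw [show ([2] ++ u : List (Fin 3)) = 2 :: u from rfl, dL, if_pos rfl]
  simp only [List.append_assoc, s_append, s_pair0, s_pair1, s_t]
  noncomm_ring

lemma ML (hLeib : ∀ f g : FA3 k, d (f * g) = d f * g + sgn ![0,0,-1] f * d g)
    (hd0 : d (X 0) = 0) (hd1 : d (X 1) = 0)
    (hd3 : d (X 2) = X 0 * X 1 - X 1 * X 0 - 1) :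
    ∀ w : List (Fin 3), s k w - d (hW k w) - H k (dL k w) ∈ NS k := by
  suffices h : ∀ n (w : List (Fin 3)), inv01 w < n →
      s k w - d (hW k w) - H k (dL k w) ∈ NS k by
    intro w; exact h (inv01 w + 1) w (Nat.lt_succ_self _)
  intro n
  induction n with
  | zero => exact fun w hw => absurd hw (Nat.not_lt_zero _)
  | succ n ih =>
    intro w hw
    rcases hsc : scan w with _ | ⟨p, u⟩
    · by_cases h2 : (2 : Fin 3) ∈ w
      · obtain ⟨p, u, rfl, hg⟩ := scan_none_mem2 hsc h2
        rw [hW_none k hsc, map_zero, sub_zero, dL_t k p u hg.1,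
          map_sub, map_sub, map_sub, H_s, H_s, H_s, L5 k hg,
          hW_some k (hg.2.1 u)]
        have : s k (p ++ [2] ++ u) -
            (s k (p ++ [2] ++ u) + hW k (p ++ [1, 0] ++ u) + hW k (p ++ u) -
              hW k (p ++ [1, 0] ++ u) - hW k (p ++ u) - 0) = 0 := by abel
        rw [this]
        exact zero_mem _
      · obtain ⟨a, b, rfl⟩ := scan_none_no2 hsc h2
        rw [hW_none k hsc, map_zero, sub_zero,
          dL_no2 k h2, map_zero, sub_zero]
        exact Submodule.subset_span ⟨(a, b), rfl⟩
    · obtain ⟨hw_eq, hg⟩ := scan_some hsc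
      subst hw_eq
      have hp01 : (2:Fin 3) ∉ p ++ [0,1] := no2_app hg.1 (by decide)
      have hp10 : (2:Fin 3) ∉ p ++ [1,0] := no2_app hg.1 (by decide)
      have h1 : inv01 (p ++ [1,0] ++ u) < n := by
        have := inv01_swap p u; omega
      have h2 : inv01 (p ++ u) < n := by
        have := inv01_drop p u; omega
      have key : s k (p ++ [0,1] ++ u) - d (hW k (p ++ [0,1] ++ u)) - H k (dL k (p ++ [0,1] ++ u))
          = (s k (p ++ [1,0] ++ u) - d (hW k (p ++ [1,0] ++ u)) - H k (dL k (p ++ [1,0] ++ u)))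
            + (s k (p ++ u) - d (hW k (p ++ u)) - H k (dL k (p ++ u))) := by
        rw [hW_some k hsc, map_add, map_add, d_s k hLeib hd0 hd1 hd3, dL_t k p u hg.1]
        rw [show dL k (p ++ [0,1] ++ u) = s k (p ++ [0,1]) * dL k u from dL_append k u hp01]
        rw [L4 k hg]
        rw [show s k (p ++ [1,0]) * dL k u = dL k (p ++ [1,0] ++ u) from (dL_append k u hp10).symm]
        rw [show s k p * dL k u = dL k (p ++ u) from (dL_append k u hg.1).symm]
        abel
      rw [key]
      exact add_mem (ih _ h1) (ih _ h2)


lemma fin2_cases (i : Fin 2) : i = 0 ∨ i = 1 := by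
  fin_cases i
  exacts [Or.inl rfl, Or.inr rfl]

lemma piX (i : Fin 3) : π k (X i) = RingQuot.mkAlgHom k (weylRel k) (![Y 0, Y 1, 0] i) := by
  rw [π, X, AlgHom.comp_apply, MonoidAlgebra.lift_single, one_smul, FreeMonoid.lift_eval_of]

lemma piX0 : π k (X 0) = RingQuot.mkAlgHom k (weylRel k) (Y 0) := by rw [piX]; rfl
lemma piX1 : π k (X 1) = RingQuot.mkAlgHom k (weylRel k) (Y 1) := by rw [piX]; rfl
lemma piX2 : π k (X 2) = 0 := by
  rw [piX]
  show RingQuot.mkAlgHom k (weylRel k) 0 = 0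
  exact map_zero _

lemma piDelta : π k (X 0 * X 1 - X 1 * X 0 - 1) = 0 := by
  rw [map_sub, map_sub, map_mul, map_mul, map_one, piX0, piX1]
  have hr : RingQuot.mkAlgHom k (weylRel k) (Y 0 * Y 1)
      = RingQuot.mkAlgHom k (weylRel k) (Y 1 * Y 0 + 1) :=
    RingQuot.mkAlgHom_rel k ⟨rfl, rfl⟩
  rw [map_mul, map_add, map_mul, map_one] at hr
  rw [hr]
  abel

lemma pi_dL : ∀ l, π k (dL k l) = 0 := by
  intro l
  induction l with
  | nil => exact map_zero _
  | cons i u ih =>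
    by_cases hi : i = 2
    · subst hi
      rw [dL, if_pos rfl, map_sub, map_mul, map_mul, piDelta, zero_mul, piX2, zero_mul,
        sub_zero]
    · rw [dL, if_neg hi, map_mul, ih, mul_zero]

lemma fs3 (a : FreeMonoid (Fin 3)) (b : k) : (MonoidAlgebra.single a b : FA3 k) = MonoidAlgebra.single a b := rfl

lemma fs2 (a : FreeMonoid (Fin 2)) (b : k) : (MonoidAlgebra.single a b : FA2 k) = MonoidAlgebra.single a b := rfl

lemma single_eq_smul_s (a : FreeMonoid (Fin 3)) (b : k) :
    MonoidAlgebra.single a b = b • s k (FreeMonoid.toList a) := by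
  rw [s, FreeMonoid.ofList_toList, MonoidAlgebra.smul_single', mul_one]

lemma part1 (hLeib : ∀ f g : FA3 k, d (f * g) = d f * g + sgn ![0,0,-1] f * d g)
    (hd0 : d (X 0) = 0) (hd1 : d (X 1) = 0)
    (hd3 : d (X 2) = X 0 * X 1 - X 1 * X 0 - 1) :
    ∀ f : FA3 k, π k (d f) = 0 := by
  intro f
  induction f using MonoidAlgebra.induction_linear with
  | zero => rw [map_zero, map_zero]
  | add f g hf hg => rw [map_add, map_add, hf, hg, add_zero]
  | single a b =>
    rw [fs3, single_eq_smul_s, map_smul, d_s k hLeib hd0 hd1 hd3, map_smul, pi_dL, smul_zero]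

lemma ML_ext (hLeib : ∀ f g : FA3 k, d (f * g) = d f * g + sgn ![0,0,-1] f * d g)
    (hd0 : d (X 0) = 0) (hd1 : d (X 1) = 0)
    (hd3 : d (X 2) = X 0 * X 1 - X 1 * X 0 - 1) (f : FA3 k) :
    f - d (H k f) - H k (d f) ∈ NS k := by
  set T : FA3 k →ₗ[k] FA3 k := LinearMap.id - d ∘ₗ H k - H k ∘ₗ d with hT
  have hTf : ∀ g : FA3 k, T g = g - d (H k g) - H k (d g) := by
    intro g
    simp [hT, LinearMap.sub_apply, LinearMap.comp_apply]
  rw [← hTf]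
  induction f using MonoidAlgebra.induction_linear with
  | zero => rw [map_zero]; exact zero_mem _
  | add f g hf hg => rw [map_add]; exact add_mem hf hg
  | single a b =>
    rw [hTf, fs3, single_eq_smul_s, map_smul, map_smul, map_smul, map_smul, ← smul_sub,
      ← smul_sub, H_s, d_s k hLeib hd0 hd1 hd3]
    exact Submodule.smul_mem _ _ (ML k hLeib hd0 hd1 hd3 _)

def Fm : FreeMonoid (Fin 2) →* FA3 k := FreeMonoid.lift ![X 0, X 1]

def ι : FA2 k →ₐ[k] FA3 k := MonoidAlgebra.lift k (FA3 k) (FreeMonoid (Fin 2)) (Fm k)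

lemma d_Fm (hLeib : ∀ f g : FA3 k, d (f * g) = d f * g + sgn ![0,0,-1] f * d g)
    (hd0 : d (X 0) = 0) (hd1 : d (X 1) = 0) :
    ∀ w : FreeMonoid (Fin 2), d (Fm k w) = 0 := by
  suffices h : ∀ l : List (Fin 2), d (Fm k (FreeMonoid.ofList l)) = 0 by
    intro w
    have := h (FreeMonoid.toList w)
    rwa [FreeMonoid.ofList_toList] at this
  intro l
  induction l with
  | nil => rw [show FreeMonoid.ofList ([] : List (Fin 2)) = 1 from rfl, map_one, d_one k hLeib]
  | cons i l ih =>
    rw [show FreeMonoid.ofList (i :: l) = FreeMonoid.of i * FreeMonoid.ofList l from rfl,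
      map_mul, hLeib, ih, mul_zero, add_zero, Fm, FreeMonoid.lift_eval_of]
    rcases fin2_cases i with rfl | rfl
    · rw [show (![X 0, X 1] : Fin 2 → FA3 k) 0 = X 0 from rfl, hd0, zero_mul]
    · rw [show (![X 0, X 1] : Fin 2 → FA3 k) 1 = X 1 from rfl, hd1, zero_mul]

lemma pi_Fm : ∀ l : List (Fin 2), π k (Fm k (FreeMonoid.ofList l))
    = RingQuot.mkAlgHom k (weylRel k) (MonoidAlgebra.single (FreeMonoid.ofList l) 1) := by
  intro l
  induction l with
  | nil =>
    rw [show FreeMonoid.ofList ([] : List (Fin 2)) = 1 from rfl, map_one, map_one,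
      show MonoidAlgebra.single (1 : FreeMonoid (Fin 2)) (1:k) = 1 from (MonoidAlgebra.one_def).symm,
      map_one]
  | cons i l ih =>
    rw [show FreeMonoid.ofList (i :: l) = FreeMonoid.of i * FreeMonoid.ofList l from rfl,
      map_mul, map_mul,
      show MonoidAlgebra.single (FreeMonoid.of i * FreeMonoid.ofList l) (1:k)
        = Y i * MonoidAlgebra.single (FreeMonoid.ofList l) 1 by
          rw [Y, MonoidAlgebra.single_mul_single, one_mul],
      map_mul, ih, Fm, FreeMonoid.lift_eval_of]
    rcases fin2_cases i with rfl | rfl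
    · rw [show (![X 0, X 1] : Fin 2 → FA3 k) 0 = X 0 from rfl, piX0]
    · rw [show (![X 0, X 1] : Fin 2 → FA3 k) 1 = X 1 from rfl, piX1]

lemma pi_iota (a : FA2 k) : π k (ι k a) = RingQuot.mkAlgHom k (weylRel k) a := by
  induction a using MonoidAlgebra.induction_linear with
  | zero => rw [map_zero, map_zero, map_zero]
  | add f g hf hg => rw [map_add, map_add, map_add, hf, hg]
  | single w c =>
    rw [fs2, ι, MonoidAlgebra.lift_single, map_smul,
      show MonoidAlgebra.single w c = c • MonoidAlgebra.single w (1:k) by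
        rw [MonoidAlgebra.smul_single', mul_one],
      map_smul]
    have := pi_Fm k (FreeMonoid.toList w)
    rw [FreeMonoid.ofList_toList] at this
    rw [this]

lemma d_iota (hLeib : ∀ f g : FA3 k, d (f * g) = d f * g + sgn ![0,0,-1] f * d g)
    (hd0 : d (X 0) = 0) (hd1 : d (X 1) = 0) (a : FA2 k) :
    d (ι k a) = 0 := by
  induction a using MonoidAlgebra.induction_linear with
  | zero => rw [map_zero, map_zero]
  | add f g hf hg => rw [map_add, map_add, hf, hg, add_zero]
  | single w c =>
    rw [fs2, ι, MonoidAlgebra.lift_single, map_smul, d_Fm k hLeib hd0 hd1, smul_zero]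


def DD : Module.End k (Polynomial k) := Polynomial.derivative
def MM : Module.End k (Polynomial k) := LinearMap.mulLeft k Polynomial.X

def phiW : FA2 k →ₐ[k] Module.End k (Polynomial k) :=
  MonoidAlgebra.lift k _ (FreeMonoid (Fin 2)) (FreeMonoid.lift ![DD k, MM k])

lemma phiW_Y (i : Fin 2) : phiW k (Y i) = ![DD k, MM k] i := by
  rw [phiW, Y, MonoidAlgebra.lift_single, one_smul, FreeMonoid.lift_eval_of]

lemma phiW_rel : ∀ ⦃a b : FA2 k⦄, weylRel k a b → phiW k a = phiW k b := by
  rintro a b ⟨rfl, rfl⟩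
  rw [map_mul, map_add, map_mul, map_one, phiW_Y, phiW_Y]
  show (![DD k, MM k] 0) * (![DD k, MM k] 1) = (![DD k, MM k] 1) * (![DD k, MM k] 0) + 1
  show DD k * MM k = MM k * DD k + 1
  apply LinearMap.ext
  intro p
  simp only [Module.End.mul_apply, LinearMap.add_apply, Module.End.one_apply, DD, MM,
    LinearMap.mulLeft_apply, Polynomial.derivative_mul, Polynomial.derivative_X, one_mul]
  ring

def rho : Weyl k →ₐ[k] Module.End k (Polynomial k) :=
  RingQuot.liftAlgHom k ⟨phiW k, phiW_rel k⟩

lemma rho_mk (a : FA2 k) : rho k (RingQuot.mkAlgHom k (weylRel k) a) = phiW k a :=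
  RingQuot.liftAlgHom_mkAlgHom_apply k _ _ _

lemma s_replicate (i : Fin 3) : ∀ n, s k (List.replicate n i) = X i ^ n := by
  intro n
  induction n with
  | zero => rw [pow_zero]; exact s_nil k
  | succ n ih =>
    rw [List.replicate_succ, s_cons, ih, ← pow_succ']

lemma rho_pi_nw (i j : ℕ) : rho k (π k (s k (nw i j))) = MM k ^ i * DD k ^ j := by
  rw [nw, s_append, s_replicate, s_replicate, map_mul, map_mul, map_pow, map_pow,
    map_pow, map_pow, piX0, piX1, rho_mk, rho_mk, phiW_Y, phiW_Y]
  rfl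

lemma MM_pow (n : ℕ) (p : Polynomial k) : (MM k ^ n) p = Polynomial.X ^ n * p := by
  induction n generalizing p with
  | zero => rw [pow_zero, pow_zero, one_mul]; rfl
  | succ n ih =>
    rw [pow_succ, Module.End.mul_apply, show (MM k) p = Polynomial.X * p from rfl, ih,
      pow_succ, mul_assoc]

lemma DD_pow (n : ℕ) (p : Polynomial k) :
    (DD k ^ n) p = (⇑(Polynomial.derivative (R := k)))^[n] p :=
  Module.End.pow_apply _ _ _

lemma pbw [CharZero k] {f : FA3 k} (hf : f ∈ NS k) (h0 : π k f = 0) : f = 0 := by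
  rw [NS, Finsupp.mem_span_range_iff_exists_finsupp] at hf
  obtain ⟨c, hc⟩ := hf
  by_contra hne
  have hcne : c ≠ 0 := by
    rintro rfl
    rw [Finsupp.sum_zero_index] at hc
    exact hne hc.symm
  have hsupp : c.support.Nonempty := Finsupp.support_nonempty_iff.mpr hcne
  have hTne : (c.support.image Prod.snd).Nonempty := hsupp.image _
  set j₀ := (c.support.image Prod.snd).min' hTne with hj₀def
  have hj₀ : j₀ ∈ c.support.image Prod.snd := Finset.min'_mem _ _
  obtain ⟨⟨i₁, j₁⟩, hmem, hj₁⟩ := Finset.mem_image.mp hj₀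
  simp only at hj₁
  subst hj₁
  have hop2 : (c.sum fun ij a => a • (MM k ^ ij.1 * DD k ^ ij.2)) = 0 := by
    have hop : rho k (π k f) = 0 := by rw [h0, map_zero]
    rw [← hc, map_finsuppSum, map_finsuppSum] at hop
    rw [← hop]
    apply Finsupp.sum_congr
    intro ij _
    rw [map_smul, map_smul, rho_pi_nw]
  have heval := congrArg
    (fun O : Module.End k (Polynomial k) => (O (Polynomial.X ^ j₀)).coeff i₁) hop2
  simp only [Finsupp.sum, LinearMap.coe_sum, Finset.sum_apply, LinearMap.smul_apply,
    LinearMap.zero_apply, Polynomial.coeff_zero] at heval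
  rw [Polynomial.finset_sum_coeff] at heval
  have hterm : ∀ ij ∈ c.support, ij ≠ (i₁, j₀) →
      (Polynomial.coeff ((c ij • ((MM k ^ ij.1 * DD k ^ ij.2) (Polynomial.X ^ j₀)))) i₁) = 0 := by
    rintro ⟨i, j⟩ hij hne'
    have hjge : j₀ ≤ j := Finset.min'_le _ _ (Finset.mem_image.mpr ⟨(i,j), hij, rfl⟩)
    rw [Module.End.mul_apply, DD_pow, Polynomial.iterate_derivative_X_pow_eq_smul, MM_pow]
    rcases lt_or_eq_of_le hjge with hlt | heq
    · rw [Nat.descFactorial_eq_zero_iff_lt.mpr hlt]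
      simp
    · have hine : i ≠ i₁ := by
        rintro rfl
        exact hne' (by rw [heq])
      subst heq
      simp only [Nat.sub_self, pow_zero]
      rw [mul_smul_comm, mul_one, Polynomial.coeff_smul, Polynomial.coeff_smul, Polynomial.coeff_X_pow,
        if_neg (fun h => hine h.symm)]
      simp
  rw [Finset.sum_eq_single_of_mem (i₁, j₀) hmem hterm] at heval
  rw [Module.End.mul_apply, DD_pow, Polynomial.iterate_derivative_X_pow_eq_smul, MM_pow] at heval
  simp [Nat.descFactorial_self, Nat.factorial_ne_zero, mul_smul_comm,
    Polynomial.coeff_smul, Polynomial.coeff_X_pow] at heval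
  exact (Finsupp.mem_support_iff.mp hmem) heval

end

/-- Let `A = k⟨x₁, x₂, x₃⟩` (char k = 0) be the DG algebra with
`|x₁| = |x₂| = 0`, `|x₃| = −1`, `d x₁ = d x₂ = 0`, `d x₃ = δ = x₁x₂ − x₂x₁ − 1`. Then the
quotient map `π : A → A/(x₃, δ) ≅ A₁` (the Weyl algebra in degree 0 with zero differential)
is a quasi-isomorphism of DG algebras: `π` kills boundaries, every element of `A₁` lifts to
a cycle, and every cycle killed by `π` is a boundary. In particular `H⁰(A) ≅ A₁` and
`Hⁿ(A) = 0` for `n ≠ 0`. -/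
theorem stmt15 (k : Type) [Field k] [CharZero k]
    (degs : Fin 3 → ℤ) (hdegs : degs = ![0, 0, -1])
    (d : FA3 k →ₗ[k] FA3 k)
    (hd2 : ∀ f, d (d f) = 0)
    (hLeib : ∀ f g : FA3 k, d (f * g) = d f * g + sgn degs f * d g)
    (δ : FA3 k) (hδ : δ = X 0 * X 1 - X 1 * X 0 - 1)
    (hd0 : d (X 0) = 0) (hd1 : d (X 1) = 0) (hd3 : d (X 2) = δ) :
    -- `π` is a chain map to `(A₁, 0)`: it kills the image of `d`
    (∀ f : FA3 k, π k (d f) = 0) ∧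
    -- surjectivity on cohomology: every element of `A₁` is the image of a cycle
    (∀ w : Weyl k, ∃ f : FA3 k, d f = 0 ∧ π k f = w) ∧
    -- injectivity on cohomology: a cycle mapping to `0` is a boundary
    (∀ f : FA3 k, d f = 0 → π k f = 0 → ∃ g : FA3 k, d g = f) := by
  subst hdegs
  subst hδ
  refine ⟨part1 k hLeib hd0 hd1 hd3, ?_, ?_⟩
  · intro w
    obtain ⟨a, ha⟩ := RingQuot.mkAlgHom_surjective k (weylRel k) w
    exact ⟨ι k a, d_iota k hLeib hd0 hd1 a, by rw [pi_iota, ha]⟩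
  · intro f hdf hπf
    refine ⟨H k f, ?_⟩
    have hmem := ML_ext k hLeib hd0 hd1 hd3 f
    rw [hdf, map_zero, sub_zero] at hmem
    have hz : π k (f - d (H k f)) = 0 := by
      rw [map_sub, hπf, part1 k hLeib hd0 hd1 hd3 (H k f), sub_zero]
    have hzero : f - d (H k f) = 0 := pbw k hmem hz
    exact (sub_eq_zero.mp hzero).symm
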